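/- Let X be a d-dimensional complex vector space, n ≥ d, τ_1,…,τ_n ∈ X and f_1,…,f_n ∈ X* with f_j(τ_j) = 1 for all j. If the frame operator S x = Σ_j f_j(x) τ_j is diagonalizable with nonnegative real eigenvalues, then max_{j ≠ k} |f_j(τ_k)| ≥ √((n − d)/(d(n − 1))). (First order Welch bound for Banach spaces.) -/

import Mathlib

open Finset

lemma trace_smulRight'' {X : Type*} [AddCommGroup X] [Module ℂ X] [FiniteDimensional ℂ X]
    (g : Module.Dual ℂ X) (m : X) :
    LinearMap.trace ℂ X (LinearMap.smulRight g m) = g m := by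
  have h : LinearMap.smulRight g m = dualTensorHom ℂ X X (g ⊗ₜ m) := by
    ext x; simp
  rw [h, LinearMap.trace_eq_contract_apply]
  simp

/-- First order Welch bound for Banach spaces (product form): if `f j (τ j) = 1` for all `j`
and the frame operator is diagonalizable with nonnegative real eigenvalues, then
`max_{j ≠ k} |f j (τ k)| ≥ √((n - d)/(d (n - 1)))`. -/
theorem welch_first_order {X : Type*} [AddCommGroup X] [Module ℂ X]
    [FiniteDimensional ℂ X]
    (d n : ℕ) (hd : Module.finrank ℂ X = d) (hd1 : 1 ≤ d) (hdn : d ≤ n) (hn2 : 2 ≤ n)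
    (τ : Fin n → X) (f : Fin n → Module.Dual ℂ X)
    (hone : ∀ j, f j (τ j) = 1)
    (S : X →ₗ[ℂ] X) (hS : S = ∑ j, LinearMap.smulRight (f j) (τ j))
    (hdiag : ∃ (b : Module.Basis (Fin d) ℂ X) (lam : Fin d → ℝ),
      (∀ i, 0 ≤ lam i) ∧ ∀ i, S (b i) = (lam i : ℂ) • b i) :
    Real.sqrt (((n : ℝ) - d) / (d * ((n : ℝ) - 1))) ≤
      ⨆ p : {q : Fin n × Fin n // q.1 ≠ q.2},
        ‖f p.1.1 (τ p.1.2)‖ := by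
  classical
  obtain ⟨b, lam, hlam0, hlameig⟩ := hdiag
  set M : ℝ := ⨆ p : {q : Fin n × Fin n // q.1 ≠ q.2},
        ‖f p.1.1 (τ p.1.2)‖ with hM
  have hne : Nonempty {q : Fin n × Fin n // q.1 ≠ q.2} := by
    refine ⟨⟨(⟨0, by omega⟩, ⟨1, by omega⟩), ?_⟩⟩
    simp [Fin.ext_iff]
  have hbdd : BddAbove (Set.range fun p : {q : Fin n × Fin n // q.1 ≠ q.2} =>
      ‖f p.1.1 (τ p.1.2)‖) := (Set.finite_range _).bddAbove
  have hMle : ∀ (j k : Fin n), j ≠ k → ‖f j (τ k)‖ ≤ M := by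
    intro j k hjk
    exact le_ciSup hbdd ⟨(j, k), hjk⟩
  have hM0 : 0 ≤ M := by
    obtain ⟨p⟩ := hne
    exact le_trans (norm_nonneg _) (le_ciSup hbdd p)
  -- trace of S
  have htrS : LinearMap.trace ℂ X S = (n : ℂ) := by
    rw [hS, map_sum]
    simp only [trace_smulRight'', hone]
    simp
  -- eigenbasis trace formulas
  have hmat : ∀ i j : Fin d, LinearMap.toMatrix b b S i j =
      if i = j then (lam i : ℂ) else 0 := by
    intro i j
    rw [LinearMap.toMatrix_apply, hlameig, map_smul, Finsupp.smul_apply, Module.Basis.repr_self,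
      Finsupp.single_apply]
    rcases eq_or_ne i j with h | h
    · simp [h]
    · simp [h, Ne.symm h]
  have htrS' : LinearMap.trace ℂ X S = ∑ i, (lam i : ℂ) := by
    rw [LinearMap.trace_eq_matrix_trace ℂ b, Matrix.trace]
    simp [Matrix.diag, hmat]
  have hsumlam : ∑ i, lam i = (n : ℝ) := by
    have := htrS'.symm.trans htrS
    have h2 : ((∑ i, lam i : ℝ) : ℂ) = (n : ℂ) := by push_cast; simpa using this
    exact_mod_cast h2
  -- trace of S ∘ S
  have hcomp : ∀ j k : Fin n,
      (LinearMap.smulRight (f j) (τ j)) ∘ₗ (LinearMap.smulRight (f k) (τ k)) =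
      LinearMap.smulRight (f k) ((f j (τ k)) • τ j) := by
    intro j k; ext x
    simp [LinearMap.smulRight_apply, smul_smul, mul_comm]
  have hSS : S ∘ₗ S = ∑ j, ∑ k, LinearMap.smulRight (f k) ((f j (τ k)) • τ j) := by
    rw [← Module.End.mul_eq_comp, hS, Finset.sum_mul_sum]
    exact Finset.sum_congr rfl fun j _ => Finset.sum_congr rfl fun k _ => by
      rw [Module.End.mul_eq_comp, hcomp]
  have htrS2 : LinearMap.trace ℂ X (S ∘ₗ S) =
      ∑ j, ∑ k, f j (τ k) * f k (τ j) := by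
    rw [hSS, map_sum]
    refine Finset.sum_congr rfl fun j _ => ?_
    rw [map_sum]
    refine Finset.sum_congr rfl fun k _ => ?_
    rw [trace_smulRight'']
    simp [mul_comm]
  have htrS2' : LinearMap.trace ℂ X (S ∘ₗ S) = ∑ i, ((lam i : ℂ))^2 := by
    have hmat2 : ∀ i j : Fin d, LinearMap.toMatrix b b (S ∘ₗ S) i j =
        if i = j then ((lam i : ℂ))^2 else 0 := by
      intro i j
      rw [LinearMap.toMatrix_apply, LinearMap.comp_apply, hlameig, map_smul, hlameig,
        smul_smul, map_smul, Finsupp.smul_apply, Module.Basis.repr_self, Finsupp.single_apply]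
      rcases eq_or_ne i j with h | h
      · simp [h, sq]
      · simp [h, Ne.symm h]
    rw [LinearMap.trace_eq_matrix_trace ℂ b, Matrix.trace]
    simp [Matrix.diag, hmat2]
  -- split off diagonal
  set I : ℂ := ∑ j, ∑ k ∈ univ.erase j, f j (τ k) * f k (τ j) with hI
  have hsplit : (∑ j, ∑ k, f j (τ k) * f k (τ j)) = I + (n : ℂ) := by
    have : ∀ j : Fin n, (∑ k, f j (τ k) * f k (τ j)) =
        (∑ k ∈ univ.erase j, f j (τ k) * f k (τ j)) + 1 := by
      intro j
      rw [← Finset.sum_erase_add univ _ (mem_univ j), hone]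
      simp
    rw [Finset.sum_congr rfl (fun j _ => this j), Finset.sum_add_distrib]
    simp [hI]
  -- real part of I
  have hIre : I.re = (∑ i, (lam i)^2) - n := by
    have h1 : I = (∑ i, ((lam i : ℂ))^2) - n := by
      rw [← htrS2', htrS2, hsplit]; ring
    rw [h1]
    push_cast
    simp [Complex.ofReal_sum]
    norm_cast
  -- Cauchy-Schwarz
  have hcs : (n : ℝ)^2 ≤ (d : ℝ) * ∑ i, (lam i)^2 := by
    have := Finset.sum_mul_sq_le_sq_mul_sq Finset.univ (fun _ : Fin d => (1 : ℝ)) lam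
    simp only [one_mul, one_pow, Finset.sum_const, card_univ, Fintype.card_fin,
      nsmul_eq_mul, mul_one] at this
    rwa [hsumlam] at this
  -- bound |I|
  have hIabs : ‖I‖ ≤ (n * (n - 1) : ℝ) * M^2 := by
    calc ‖I‖ ≤ ∑ j, ‖∑ k ∈ univ.erase j, f j (τ k) * f k (τ j)‖ :=
          norm_sum_le _ _
      _ ≤ ∑ j, ∑ k ∈ univ.erase j, ‖f j (τ k) * f k (τ j)‖ := by
          gcongr with j _
          exact norm_sum_le _ _
      _ ≤ ∑ j : Fin n, ∑ k ∈ univ.erase j, M^2 := by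
          gcongr with j _ k hk
          rw [norm_mul, sq]
          have hkj : (k : Fin n) ≠ j := Finset.ne_of_mem_erase hk
          exact mul_le_mul (hMle j k hkj.symm) (hMle k j hkj) (norm_nonneg _) hM0
      _ = (n * (n - 1) : ℝ) * M^2 := by
          simp only [Finset.sum_const, Finset.card_erase_of_mem (mem_univ _), card_univ,
            Fintype.card_fin, nsmul_eq_mul]
          push_cast [Nat.cast_sub (show 1 ≤ n by omega)]
          ring
  -- combine
  have hRe_le : I.re ≤ ‖I‖ := Complex.re_le_norm I
  have hkey : (n:ℝ)^2/d - n ≤ (n * (n-1) : ℝ) * M^2 := by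
    have h1 : (n:ℝ)^2/d - n ≤ I.re := by
      rw [hIre]
      have hd0 : (0:ℝ) < d := by positivity
      have : (n:ℝ)^2/d ≤ ∑ i, (lam i)^2 := by
        rw [div_le_iff₀ hd0]
        linarith [hcs]
      linarith
    linarith [le_trans h1 (le_trans hRe_le hIabs)]
  have hn1 : (1:ℝ) ≤ (n:ℝ) - 1 := by
    have : (2:ℝ) ≤ n := by exact_mod_cast hn2
    linarith
  have hd0 : (0:ℝ) < d := by positivity
  have hfinal : ((n:ℝ) - d) / (d * ((n:ℝ) - 1)) ≤ M^2 := by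
    rw [div_le_iff₀ (by positivity)]
    have hn0 : (0:ℝ) < n := by positivity
    -- from hkey : n²/d - n ≤ n(n-1) M²
    have h2 : (n:ℝ)^2 - d * n ≤ d * (n * (n-1) * M^2) := by
      have := mul_le_mul_of_nonneg_left hkey (le_of_lt hd0)
      calc (n:ℝ)^2 - d*n = d * ((n:ℝ)^2/d - n) := by field_simp
        _ ≤ d * (n * (n-1) * M^2) := this
    have h3 : ((n:ℝ) - d) * n ≤ (M^2 * (d * ((n:ℝ)-1))) * n := by nlinarith
    have := le_of_mul_le_mul_right (by linarith [h3] : ((n:ℝ) - d) * n ≤ (M^2 * (d * ((n:ℝ)-1))) * n) hn0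
    linarith
  calc Real.sqrt (((n : ℝ) - d) / (d * ((n : ℝ) - 1))) ≤ Real.sqrt (M^2) :=
        Real.sqrt_le_sqrt hfinal
    _ = M := Real.sqrt_sq hM0
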